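/- Fix an integer n ≥ 1 and define y_k := (2k+2)! · c_{2k} / (4^k · (2n+1)) for every k ≥ 0. Then y_0 = 2/(2n+1) and, for every k ≥ 1, k · y_k = −Σ_{p=0}^{k−1} y_p · (2k+2)! / ((2p+2)! · (2k−2p+2)!) · ((k−p)(2n−2p+1) + p(2k−2p+2)). -/

import Mathlib

open scoped BigOperators
open Nat

noncomputable section

/-- The formal power series `sinh u = Σ u^{2j+1}/(2j+1)!`. -/
def sinhS : PowerSeries ℚ := PowerSeries.mk fun m => if m % 2 = 1 then (1:ℚ)/(m)! else 0

/-- The formal power series `h = sinh(u)/u = Σ u^{2j}/(2j+1)!` (constant term 1, invertible). -/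
def hS : PowerSeries ℚ := PowerSeries.mk fun m => if m % 2 = 0 then (1:ℚ)/(m+1)! else 0

/-- `c_m`, the coefficient of `u^m` in `(u/sinh u)^{2n+1} = (h⁻¹)^{2n+1}`. -/
def ccoef (n m : ℕ) : ℚ := PowerSeries.coeff m ((hS⁻¹)^(2*n+1))

/-- `y_k = (2k+2)! c_{2k} / (4^k (2n+1))`. -/
def ycoef (n k : ℕ) : ℚ := (((2*k+2))! : ℚ) * ccoef n (2*k) / (4^k * (2*(n:ℚ)+1))

open PowerSeries

def coshS : PowerSeries ℚ := PowerSeries.mk fun m => if m % 2 = 0 then (1:ℚ)/(m)! else 0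

def FS (n : ℕ) : PowerSeries ℚ := (hS⁻¹)^(2*n+1)

lemma constHS : constantCoeff hS = 1 := by
  rw [hS, ← coeff_zero_eq_constantCoeff_apply, coeff_mk]
  norm_num

lemma constHS_ne : constantCoeff hS ≠ 0 := by rw [constHS]; norm_num

lemma hS_ne_zero : hS ≠ 0 := by
  intro h
  apply constHS_ne
  rw [h, map_zero]

lemma keyE (n : ℕ) :
    hS * (d⁄dX ℚ (FS n)) + PowerSeries.C (2*(n:ℚ)+1) * ((d⁄dX ℚ hS) * FS n) = 0 := by
  have h1 : hS^(2*n+1) * FS n = 1 := by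
    rw [FS, ← mul_pow, PowerSeries.mul_inv_cancel _ constHS_ne, one_pow]
  have h2 := congrArg (d⁄dX ℚ) h1
  rw [Derivation.leibniz, Derivation.leibniz_pow, Derivation.map_one_eq_zero] at h2
  simp only [smul_eq_mul, nsmul_eq_mul] at h2
  have hpow : (hS:ℚ⟦X⟧)^(2*n) ≠ 0 := pow_ne_zero _ hS_ne_zero
  apply mul_left_cancel₀ hpow
  rw [mul_zero]
  have hcast : ((2*n+1 : ℕ) : ℚ⟦X⟧) = PowerSeries.C (2*(n:ℚ)+1) := by
    rw [← map_natCast (PowerSeries.C) (2*n+1)]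
    push_cast
    ring
  rw [hcast] at h2
  calc hS^(2*n) * (hS * (d⁄dX ℚ (FS n)) + PowerSeries.C (2*(n:ℚ)+1) * ((d⁄dX ℚ hS) * FS n))
      = hS ^ (2 * n + 1) * (d⁄dX ℚ) (FS n) +
        FS n * (PowerSeries.C (2*(n:ℚ)+1) * (hS ^ (2 * n + 1 - 1) * (d⁄dX ℚ) hS)) := by
        simp only [Nat.add_sub_cancel]
        ring
    _ = 0 := h2

lemma sinh_eq : sinhS = PowerSeries.X * hS := by
  ext m
  cases m with
  | zero =>
    simp [sinhS, coeff_mk, coeff_zero_eq_constantCoeff_apply, map_mul, constantCoeff_X]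
  | succ m =>
    rw [coeff_succ_X_mul]
    simp only [sinhS, hS, coeff_mk]
    by_cases h : m % 2 = 0
    · rw [if_pos h, if_pos (by omega : (m+1) % 2 = 1)]
    · rw [if_neg h, if_neg (by omega : ¬ (m+1) % 2 = 1)]

lemma XXdhS : PowerSeries.X^2 * (d⁄dX ℚ hS) = PowerSeries.X * coshS - sinhS := by
  ext m
  rw [map_sub]
  match m with
  | 0 =>
    rw [show (PowerSeries.X:ℚ⟦X⟧)^2 * (d⁄dX ℚ hS) = PowerSeries.X * (PowerSeries.X * (d⁄dX ℚ hS)) by ring]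
    simp [coeff_zero_eq_constantCoeff_apply, map_mul, constantCoeff_X, sinhS, coeff_mk]
  | 1 =>
    rw [show (PowerSeries.X:ℚ⟦X⟧)^2 * (d⁄dX ℚ hS) = PowerSeries.X * (PowerSeries.X * (d⁄dX ℚ hS)) by ring]
    rw [coeff_succ_X_mul, coeff_succ_X_mul, coeff_zero_eq_constantCoeff_apply, map_mul,
      constantCoeff_X, zero_mul]
    simp [coshS, sinhS, coeff_mk]
  | (j+2) =>
    rw [show (PowerSeries.X:ℚ⟦X⟧)^2 * (d⁄dX ℚ hS) = PowerSeries.X * (PowerSeries.X * (d⁄dX ℚ hS)) by ring]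
    rw [coeff_succ_X_mul, coeff_succ_X_mul, coeff_derivative, coeff_succ_X_mul]
    simp only [hS, coshS, sinhS, coeff_mk]
    by_cases h : j % 2 = 1
    · rw [if_pos (by omega : (j+1) % 2 = 0), if_pos (by omega : (j+1) % 2 = 0),
        if_pos (by omega : (j+2) % 2 = 1)]
      have h1 : ((j+2)! : ℚ) = (j+2) * (j+1)! := by
        rw [Nat.factorial_succ]; push_cast; ring
      have h2 : ((j+1)! : ℚ) ≠ 0 := by positivity
      have h3 : ((j+2)! : ℚ) ≠ 0 := by positivity
      field_simp
      rw [h1]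
      ring
    · rw [if_neg (by omega : ¬ (j+1) % 2 = 0), if_neg (by omega : ¬ (j+1) % 2 = 0),
        if_neg (by omega : ¬ (j+2) % 2 = 1)]
      simp

lemma master (n : ℕ) :
    (PowerSeries.X * (d⁄dX ℚ (FS n))) * sinhS^2
      + PowerSeries.C (2*(n:ℚ)+1) * (FS n * (PowerSeries.X*(sinhS*coshS) - sinhS^2)) = 0 := by
  have e2 : PowerSeries.X * coshS = PowerSeries.X^2 * (d⁄dX ℚ hS) + PowerSeries.X * hS := by
    rw [XXdhS, sinh_eq]; ring
  rw [sinh_eq]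
  linear_combination (PowerSeries.X:ℚ⟦X⟧)^3 * hS * (keyE n)
    + PowerSeries.C (2*(n:ℚ)+1) * FS n * PowerSeries.X * hS * e2

lemma odd_binom (m : ℕ) (hm : 1 ≤ m) :
    ∑ i ∈ Finset.range (m+1), (if i % 2 = 1 then ((m.choose i : ℚ)) else 0) = 2^(m-1) := by
  have hA : ∑ i ∈ Finset.range (m+1), ((m.choose i : ℚ)) = 2^m := by
    have := Nat.sum_range_choose m
    exact_mod_cast congrArg (Nat.cast : ℕ → ℚ) this
  have hB : ∑ i ∈ Finset.range (m+1), ((-1:ℚ))^i * (m.choose i : ℚ) = 0 := by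
    have := Int.alternating_sum_range_choose_of_ne (show m ≠ 0 by omega)
    exact_mod_cast congrArg (Int.cast : ℤ → ℚ) this
  have key : (2:ℚ) * (∑ i ∈ Finset.range (m+1), (if i % 2 = 1 then ((m.choose i : ℚ)) else 0))
      = ∑ i ∈ Finset.range (m+1), (((m.choose i : ℚ)) - ((-1:ℚ))^i * (m.choose i : ℚ)) := by
    rw [Finset.mul_sum]
    refine Finset.sum_congr rfl (fun i _ => ?_)
    by_cases h : i % 2 = 1
    · rw [if_pos h, Odd.neg_one_pow ⟨i/2, by omega⟩]; ring
    · rw [if_neg h, Even.neg_one_pow ⟨i/2, by omega⟩]; ring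
  rw [Finset.sum_sub_distrib, hA, hB, sub_zero] at key
  obtain ⟨m', rfl⟩ : ∃ m', m = m'+1 := ⟨m-1, by omega⟩
  rw [pow_succ] at key
  simp only [Nat.add_sub_cancel]
  linarith

lemma coeff_sinh_cosh (m : ℕ) :
    PowerSeries.coeff m (sinhS * coshS) = if m % 2 = 1 then (2:ℚ)^(m-1)/(m)! else 0 := by
  rw [PowerSeries.coeff_mul, Finset.Nat.sum_antidiagonal_eq_sum_range_succ_mk]
  simp only [sinhS, coshS, coeff_mk]
  by_cases hm : m % 2 = 1
  · rw [if_pos hm]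
    have step : ∀ i ∈ Finset.range (m+1),
        (if i % 2 = 1 then (1:ℚ)/(i)! else 0) * (if (m-i) % 2 = 0 then (1:ℚ)/((m-i))! else 0)
        = (if i % 2 = 1 then ((m.choose i : ℚ)) else 0) / (m)! := by
      intro i hi
      have him : i ≤ m := by simpa using Nat.lt_succ_iff.mp (Finset.mem_range.mp hi)
      by_cases h : i % 2 = 1
      · rw [if_pos h, if_pos (by omega : (m-i) % 2 = 0), if_pos h]
        have hc : ((m.choose i : ℚ)) * (i)! * ((m-i))! = (m)! := by
          exact_mod_cast congrArg (Nat.cast : ℕ → ℚ) (Nat.choose_mul_factorial_mul_factorial him)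
        have f1 : ((i)! : ℚ) ≠ 0 := by positivity
        have f2 : (((m-i))! : ℚ) ≠ 0 := by positivity
        have f3 : ((m)! : ℚ) ≠ 0 := by positivity
        field_simp
        linear_combination (-1 : ℚ) * hc
      · rw [if_neg h, if_neg h, zero_mul, zero_div]
    rw [Finset.sum_congr rfl step, ← Finset.sum_div, odd_binom m (by omega)]
  · rw [if_neg hm]
    refine Finset.sum_eq_zero (fun i hi => ?_)
    have him : i ≤ m := by simpa using Nat.lt_succ_iff.mp (Finset.mem_range.mp hi)
    by_cases h : i % 2 = 1
    · rw [if_neg (by omega : ¬ (m-i) % 2 = 0), mul_zero]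
    · rw [if_neg h, zero_mul]

lemma coeff_sinh_sq (m : ℕ) :
    PowerSeries.coeff m (sinhS^2) = if m % 2 = 0 ∧ m ≠ 0 then (2:ℚ)^(m-1)/(m)! else 0 := by
  rw [sq, PowerSeries.coeff_mul, Finset.Nat.sum_antidiagonal_eq_sum_range_succ_mk]
  simp only [sinhS, coeff_mk]
  by_cases hm : m % 2 = 0 ∧ m ≠ 0
  · rw [if_pos hm]
    obtain ⟨hm0, hm1⟩ := hm
    have step : ∀ i ∈ Finset.range (m+1),
        (if i % 2 = 1 then (1:ℚ)/(i)! else 0) * (if (m-i) % 2 = 1 then (1:ℚ)/((m-i))! else 0)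
        = (if i % 2 = 1 then ((m.choose i : ℚ)) else 0) / (m)! := by
      intro i hi
      have him : i ≤ m := by simpa using Nat.lt_succ_iff.mp (Finset.mem_range.mp hi)
      by_cases h : i % 2 = 1
      · rw [if_pos h, if_pos (by omega : (m-i) % 2 = 1), if_pos h]
        have hc : ((m.choose i : ℚ)) * (i)! * ((m-i))! = (m)! := by
          exact_mod_cast congrArg (Nat.cast : ℕ → ℚ) (Nat.choose_mul_factorial_mul_factorial him)
        have f1 : ((i)! : ℚ) ≠ 0 := by positivity
        have f2 : (((m-i))! : ℚ) ≠ 0 := by positivity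
        have f3 : ((m)! : ℚ) ≠ 0 := by positivity
        field_simp
        linear_combination (-1 : ℚ) * hc
      · rw [if_neg h, if_neg h, zero_mul, zero_div]
    rw [Finset.sum_congr rfl step, ← Finset.sum_div, odd_binom m (by omega)]
  · rw [if_neg hm]
    refine Finset.sum_eq_zero (fun i hi => ?_)
    have him : i ≤ m := by simpa using Nat.lt_succ_iff.mp (Finset.mem_range.mp hi)
    by_cases h : i % 2 = 1
    · rw [if_neg (by omega : ¬ (m-i) % 2 = 1), mul_zero]
    · rw [if_neg h, zero_mul]

lemma sum_even (t : ℕ → ℚ) (h : ∀ i, i % 2 = 1 → t i = 0) (m : ℕ) :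
    ∑ i ∈ Finset.range (2*m+1), t i = ∑ p ∈ Finset.range (m+1), t (2*p) := by
  induction m with
  | zero => simp
  | succ m ih =>
    rw [show 2*(m+1)+1 = (2*m+1)+1+1 from by ring, Finset.sum_range_succ, Finset.sum_range_succ,
      ih, h (2*m+1) (by omega), add_zero, Finset.sum_range_succ,
      show 2*m+1+1 = 2*(m+1) from by omega, Finset.sum_range_succ, Finset.sum_range_succ]

lemma coeff_FS (n i : ℕ) : PowerSeries.coeff i (FS n) = ccoef n i := rfl

lemma coeff_X_dF (n m : ℕ) :
    PowerSeries.coeff m (PowerSeries.X * (d⁄dX ℚ (FS n))) = (m : ℚ) * ccoef n m := by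
  cases m with
  | zero => simp [coeff_zero_eq_constantCoeff_apply, map_mul, constantCoeff_X]
  | succ m =>
    rw [coeff_succ_X_mul, coeff_derivative, coeff_FS]
    push_cast
    ring

lemma coeff_X_sc (m : ℕ) :
    PowerSeries.coeff m (PowerSeries.X * (sinhS * coshS))
      = if m % 2 = 0 ∧ m ≠ 0 then (2:ℚ)^(m-2)/((m-1))! else 0 := by
  cases m with
  | zero => simp [coeff_zero_eq_constantCoeff_apply, map_mul, constantCoeff_X]
  | succ m =>
    rw [coeff_succ_X_mul, coeff_sinh_cosh]
    by_cases h : m % 2 = 1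
    · rw [if_pos h, if_pos (by omega : (m+1) % 2 = 0 ∧ (m+1) ≠ 0),
        show (m+1)-2 = m-1 from by omega, Nat.add_sub_cancel]
    · rw [if_neg h, if_neg (by omega : ¬ ((m+1) % 2 = 0 ∧ (m+1) ≠ 0))]

lemma Ilem (n k : ℕ) :
    ∑ p ∈ Finset.range (k+1),
      ccoef n (2*p) * (2*(4:ℚ)^(k-p) / (((2*(k-p)+2))!) * ((2*(n:ℚ)+1)*((k:ℚ)-(p:ℚ)) + 2*(p:ℚ))) = 0 := by
  have h0 := congrArg (PowerSeries.coeff (2*k+2)) (master n)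
  rw [map_add, map_zero, PowerSeries.coeff_C_mul, PowerSeries.coeff_mul, PowerSeries.coeff_mul,
    Finset.Nat.sum_antidiagonal_eq_sum_range_succ_mk,
    Finset.Nat.sum_antidiagonal_eq_sum_range_succ_mk] at h0
  set t : ℕ → ℚ := fun i =>
    (i:ℚ) * ccoef n i *
      (if (2*k+2-i) % 2 = 0 ∧ (2*k+2-i) ≠ 0 then (2:ℚ)^(2*k+2-i-1)/(((2*k+2-i))!) else 0)
    + (2*(n:ℚ)+1) * (ccoef n i *
      ((if (2*k+2-i) % 2 = 0 ∧ (2*k+2-i) ≠ 0 then (2:ℚ)^(2*k+2-i-2)/(((2*k+2-i-1))!) else 0)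
       - (if (2*k+2-i) % 2 = 0 ∧ (2*k+2-i) ≠ 0 then (2:ℚ)^(2*k+2-i-1)/(((2*k+2-i))!) else 0)))
    with ht
  have h1 : ∑ i ∈ Finset.range (2*k+2+1), t i = 0 := by
    rw [← h0, Finset.mul_sum, ← Finset.sum_add_distrib]
    refine Finset.sum_congr rfl (fun i hi => ?_)
    rw [ht]
    simp only
    rw [coeff_X_dF, coeff_sinh_sq, map_sub, coeff_X_sc, coeff_sinh_sq, coeff_FS]
  have h2 : ∀ i, i % 2 = 1 → t i = 0 := by
    intro i hi
    rw [ht]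
    simp only
    rw [if_neg (by omega : ¬ ((2*k+2-i) % 2 = 0 ∧ (2*k+2-i) ≠ 0)),
      if_neg (by omega : ¬ ((2*k+2-i) % 2 = 0 ∧ (2*k+2-i) ≠ 0))]
    simp
  have h3 := sum_even t h2 (k+1)
  rw [show 2*(k+1)+1 = 2*k+2+1 from by ring, h1] at h3
  have hlast : t (2*(k+1)) = 0 := by
    rw [ht]
    simp only
    rw [if_neg (by omega : ¬ ((2*k+2-2*(k+1)) % 2 = 0 ∧ (2*k+2-2*(k+1)) ≠ 0)),
      if_neg (by omega : ¬ ((2*k+2-2*(k+1)) % 2 = 0 ∧ (2*k+2-2*(k+1)) ≠ 0))]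
    simp
  rw [Finset.sum_range_succ, hlast, add_zero] at h3
  rw [show (0:ℚ) = ∑ p ∈ Finset.range (k+1), t (2*p) from h3]
  refine Finset.sum_congr rfl (fun p hp => ?_)
  have hpk : p ≤ k := by have := Finset.mem_range.mp hp; omega
  rw [ht]
  simp only
  rw [if_pos (⟨by omega, by omega⟩ : (2*k+2-2*p) % 2 = 0 ∧ 2*k+2-2*p ≠ 0),
    if_pos (⟨by omega, by omega⟩ : (2*k+2-2*p) % 2 = 0 ∧ 2*k+2-2*p ≠ 0)]
  obtain ⟨q, rfl⟩ : ∃ q, k = p + q := ⟨k-p, by omega⟩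
  rw [show 2*(p+q)+2-2*p = 2*q+2 from by omega]
  rw [show 2*q+2-1 = 2*q+1 from by omega, show 2*q+2-2 = 2*q from by omega,
    show p+q-p = q from by omega]
  have e1 : (((2*q+2))! : ℚ) = (2*(q:ℚ)+2) * (((2*q+1))!) := by
    rw [show 2*q+2 = (2*q+1)+1 from rfl, Nat.factorial_succ]
    push_cast
    ring
  have e2 : ((((2*q+1))!) : ℚ) ≠ 0 := by positivity
  have e5 : ((2:ℚ)*q+2) ≠ 0 := by positivity
  rw [e1, show (4:ℚ)^q = 2^(2*q) from by rw [show (4:ℚ) = 2^2 from by norm_num, ← pow_mul],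
    show (2:ℚ)^(2*q+1) = 2*2^(2*q) from by rw [pow_succ]; ring]
  push_cast
  field_simp
  ring

/-- `y₀ = 2/(2n+1)` and for `k ≥ 1`,
`k y_k = −Σ_{p=0}^{k−1} y_p (2k+2)!/((2p+2)!(2k−2p+2)!) ((k−p)(2n−2p+1) + p(2k−2p+2))`. -/
theorem stmt9 (n : ℕ) (hn : 1 ≤ n) :
    ycoef n 0 = 2/(2*(n:ℚ)+1) ∧
    ∀ k : ℕ, 1 ≤ k → (k:ℚ) * ycoef n k =
      - ∑ p ∈ Finset.range k, ycoef n p *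
          ((((2*k+2))! : ℚ) / ((((2*p+2))! : ℚ) * (((2*k-2*p+2))! : ℚ))) *
          (((k:ℚ)-(p:ℚ)) * (2*(n:ℚ)-2*(p:ℚ)+1) + (p:ℚ) * (2*(k:ℚ)-2*(p:ℚ)+2)) := by
  have hn1 : (2*(n:ℚ)+1) ≠ 0 := by positivity
  have hc0 : ccoef n 0 = 1 := by
    rw [ccoef, coeff_zero_eq_constantCoeff_apply, map_pow, PowerSeries.constantCoeff_inv, constHS]
    norm_num
  constructor
  · simp only [ycoef, hc0]
    norm_num [Nat.factorial]
  · intro k hk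
    have hI := Ilem n k
    rw [Finset.sum_range_succ] at hI
    set C : ℚ := (((2*k+2))! : ℚ)/(2*4^k*(2*(n:ℚ)+1)) with hC
    have B : (k:ℚ) * ycoef n k
        = C * (ccoef n (2*k) * (2*(4:ℚ)^(k-k) / (((2*(k-k)+2))!) * ((2*(n:ℚ)+1)*((k:ℚ)-(k:ℚ)) + 2*(k:ℚ)))) := by
      rw [hC]
      simp only [ycoef]
      rw [Nat.sub_self, show 2*0+2 = 2 from rfl, show ((2)! : ℚ) = 2 from by norm_num [Nat.factorial]]
      have h4 : (4:ℚ)^k ≠ 0 := by positivity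
      have f3 : ((((2*k+2))!:ℚ)) ≠ 0 := by positivity
      field_simp
      ring
    have A : ∀ p ∈ Finset.range k,
        ycoef n p * ((((2*k+2))! : ℚ) / ((((2*p+2))! : ℚ) * (((2*k-2*p+2))! : ℚ))) *
          (((k:ℚ)-(p:ℚ)) * (2*(n:ℚ)-2*(p:ℚ)+1) + (p:ℚ) * (2*(k:ℚ)-2*(p:ℚ)+2))
        = C * (ccoef n (2*p) * (2*(4:ℚ)^(k-p) / (((2*(k-p)+2))!) * ((2*(n:ℚ)+1)*((k:ℚ)-(p:ℚ)) + 2*(p:ℚ)))) := by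
      intro p hp
      have hpk : p < k := Finset.mem_range.mp hp
      obtain ⟨q, rfl⟩ : ∃ q, k = p + q + 1 := ⟨k - p - 1, by omega⟩
      rw [hC]
      simp only [ycoef]
      rw [show 2*(p+q+1)-2*p+2 = 2*(q+1)+2 from by omega, show (p+q+1)-p = q+1 from by omega]
      have c1 : ((p+q+1:ℕ):ℚ) - (p:ℚ) = (q:ℚ)+1 := by push_cast; ring
      have f1 : ((((2*p+2))!:ℚ)) ≠ 0 := by positivity
      have f2 : ((((2*(q+1)+2))!:ℚ)) ≠ 0 := by positivity
      have f3 : ((((2*(p+q+1)+2))!:ℚ)) ≠ 0 := by positivity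
      have h4p : (4:ℚ)^p ≠ 0 := by positivity
      have h4q : (4:ℚ)^(q+1) ≠ 0 := by positivity
      have hpow : (4:ℚ)^(p+q+1) = 4^p * 4^(q+1) := by rw [← pow_add, show p+(q+1) = p+q+1 from by omega]
      rw [hpow]
      push_cast
      field_simp
      ring
    have S : (∑ p ∈ Finset.range k, ycoef n p *
          ((((2*k+2))! : ℚ) / ((((2*p+2))! : ℚ) * (((2*k-2*p+2))! : ℚ))) *
          (((k:ℚ)-(p:ℚ)) * (2*(n:ℚ)-2*(p:ℚ)+1) + (p:ℚ) * (2*(k:ℚ)-2*(p:ℚ)+2)))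
        = C * ∑ p ∈ Finset.range k,
            ccoef n (2*p) * (2*(4:ℚ)^(k-p) / (((2*(k-p)+2))!) * ((2*(n:ℚ)+1)*((k:ℚ)-(p:ℚ)) + 2*(p:ℚ))) := by
      rw [Finset.mul_sum]
      exact Finset.sum_congr rfl A
    linear_combination B + S + C * hI

end
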